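/- Let X be a Hausdorff topological space. Suppose that for every closed set A ⊆ X and every point x₀ ∉ A, letting f be the function equal to 0 on A and 1 elsewhere, there exists a continuous bounded function h : X → ℝ₊ with h(x₀) = 0 and ‖h‖_∞ = f(x₀) − inf_X f such that f + h attains its minimum on X at x₀. Then X is a completely regular topological space (i.e., the variational principle need only hold for characteristic functions of closed sets). -/
import Mathlib

open Filter Topology BoundedContinuousFunction

/-- **Remark after Theorem 2.2.**  For a Hausdorff space `X` it suffices that the
variational principle holds for characteristic functions of closed sets (the function
`f` equal to `0` on a closed set `A` and `1` elsewhere, i.e. the indicator of `Aᶜ`) to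
conclude that `X` is completely regular. -/
theorem completelyRegular_of_variational_principle_for_characteristic_functions
    {X : Type*} [TopologicalSpace X] [T2Space X]
    (H : ∀ A : Set X, IsClosed A → ∀ x₀ ∉ A,
      ∀ f : X → ℝ, (∀ x ∈ A, f x = 0) → (∀ x ∉ A, f x = 1) →
      ∃ h : X →ᵇ ℝ, (∀ x, 0 ≤ h x) ∧ h x₀ = 0 ∧
        ‖h‖ = f x₀ - ⨅ x, f x ∧
        ∀ x, f x₀ + h x₀ ≤ f x + h x) :
    CompletelyRegularSpace X := by
  classical
  constructor
  intro x K hK hx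
  set f : X → ℝ := fun x => if x ∈ K then 0 else 1 with hf
  obtain ⟨h, hpos, hx0, -, hmin⟩ := H K hK x hx f
    (fun y hy => by simp [hf, hy]) (fun y hy => by simp [hf, hy])
  have hfx : f x = 1 := by simp [hf, hx]
  have hone : ∀ y ∈ K, 1 ≤ h y := by
    intro y hy
    have := hmin y
    simp [hfx, hx0, hf, hy] at this
    linarith
  refine ⟨fun y => Set.projIcc 0 1 zero_le_one (h y),
    continuous_projIcc.comp h.continuous, ?_, ?_⟩
  · ext
    simp [Set.projIcc, hx0]
  · intro y hy
    have := hone y hy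
    ext
    simp [Set.projIcc, le_antisymm (min_le_left _ _) (le_min le_rfl this) ]
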